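/- arXiv:1204.1349 — 2 statements merged into one kernel-verified Lean document; each statement's English description precedes it below -/
import Mathlib

section
/- Let G = (V,E) be a P(2,1)-graph that is not equal to K₂³ and has no vertex of degree 2. Then there exist a vertex v of degree 3 and an edge e not incident to v such that G − e is (2,2)-tight. -/
/-! ### Multigraphs: finite vertex set `V`, finite edge set `E`; each edge `e` has
endpoints `src e` and `dst e` (loops and parallel edges are allowed). -/

structure Multigraph (V E : Type) where
  src : E → V
  dst : E → V

namespace Multigraph

variable {V E : Type}

/-- `i(X)`: the number of edges both of whose endpoints lie in `X`. -/
def iCount [Fintype E] [DecidableEq V] (G : Multigraph V E) (X : Finset V) : ℕ :=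
  (Finset.univ.filter fun e => G.src e ∈ X ∧ G.dst e ∈ X).card

/-- The degree of a vertex (a loop contributes 2). -/
def degree [Fintype E] [DecidableEq V] (G : Multigraph V E) (v : V) : ℕ :=
  (Finset.univ.filter fun e => G.src e = v).card +
    (Finset.univ.filter fun e => G.dst e = v).card

/-- The set of neighbours of a vertex. -/
def neighborSet (G : Multigraph V E) (v : V) : Set V :=
  {w | ∃ e, (G.src e = v ∧ G.dst e = w) ∨ (G.src e = w ∧ G.dst e = v)}

/-- `(k,ℓ)`-sparsity: `i(X) ≤ k|X| − ℓ` for every `X ⊆ V` spanning at least one edge. -/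
def Sparse [Fintype E] [DecidableEq V] (G : Multigraph V E) (k l : ℤ) : Prop :=
  ∀ X : Finset V, (∃ e, G.src e ∈ X ∧ G.dst e ∈ X) →
    (G.iCount X : ℤ) ≤ k * (X.card : ℤ) - l

/-- `(k,ℓ)`-tightness: `(k,ℓ)`-sparse and `|E| = k|V| − ℓ`. -/
def Tight [Fintype V] [Fintype E] [DecidableEq V] (G : Multigraph V E) (k l : ℤ) : Prop :=
  G.Sparse k l ∧ (Fintype.card E : ℤ) = k * (Fintype.card V : ℤ) - l

/-- Delete a single edge. -/
def deleteEdge (G : Multigraph V E) (e₀ : E) : Multigraph V {e : E // e ≠ e₀} :=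
  ⟨fun e => G.src e.1, fun e => G.dst e.1⟩

/-- Delete a vertex together with all edges incident to it. -/
def deleteVertex (G : Multigraph V E) (v : V) :
    Multigraph {w : V // w ≠ v} {e : E // G.src e ≠ v ∧ G.dst e ≠ v} :=
  ⟨fun e => ⟨G.src e.1, e.2.1⟩, fun e => ⟨G.dst e.1, e.2.2⟩⟩

/-- Add one new edge with endpoints `u` and `w`. -/
def addEdge (G : Multigraph V E) (u w : V) : Multigraph V (E ⊕ Unit) :=
  ⟨Sum.elim G.src fun _ => u, Sum.elim G.dst fun _ => w⟩

/-- The subgraph induced by a set of vertices `X`. -/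
def induce (G : Multigraph V E) (X : Finset V) :
    Multigraph {v : V // v ∈ X} {e : E // G.src e ∈ X ∧ G.dst e ∈ X} :=
  ⟨fun e => ⟨G.src e.1, e.2.1⟩, fun e => ⟨G.dst e.1, e.2.2⟩⟩

/-- `G` is a `P(2,1)`-graph: `(2,1)`-tight and some edge-deleted graph is `(2,2)`-tight. -/
def IsP21 [Fintype V] [Fintype E] [DecidableEq V] [DecidableEq E] (G : Multigraph V E) : Prop :=
  G.Tight 2 1 ∧ ∃ e : E, (G.deleteEdge e).Tight 2 2

/-- `G` is a `(2,2)`-circuit: `|E| = 2|V| − 1` and every edge-deleted graph is `(2,2)`-tight. -/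
def IsCircuit22 [Fintype V] [Fintype E] [DecidableEq V] [DecidableEq E]
    (G : Multigraph V E) : Prop :=
  (Fintype.card E : ℤ) = 2 * (Fintype.card V : ℤ) - 1 ∧
    ∀ e : E, (G.deleteEdge e).Tight 2 2

/-- `X` is an over-critical set (`i(X) = 2|X| − 1`) of minimum cardinality. -/
def IsMinOverCritical [Fintype E] [DecidableEq V] (G : Multigraph V E) (X : Finset V) : Prop :=
  (G.iCount X : ℤ) = 2 * (X.card : ℤ) - 1 ∧
    ∀ Y : Finset V, (G.iCount Y : ℤ) = 2 * (Y.card : ℤ) - 1 → X.card ≤ Y.card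

/-- `G` is (a copy of) `K₂³`: two distinct vertices joined by three parallel edges. -/
def IsK23 [Fintype E] (G : Multigraph V E) : Prop :=
  ∃ a b : V, a ≠ b ∧ (∀ v : V, v = a ∨ v = b) ∧ Fintype.card E = 3 ∧
    ∀ e : E, (G.src e = a ∧ G.dst e = b) ∨ (G.src e = b ∧ G.dst e = a)

/-- Adjacency via an edge belonging to the edge subset `F`. -/
def AdjOn (G : Multigraph V E) (F : Set E) (u w : V) : Prop :=
  ∃ e ∈ F, (G.src e = u ∧ G.dst e = w) ∨ (G.src e = w ∧ G.dst e = u)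

/-- Connectivity of the multigraph. -/
def Connected (G : Multigraph V E) : Prop :=
  Nonempty V ∧ ∀ u w : V, Relation.ReflTransGen (G.AdjOn Set.univ) u w

/-- 2-edge-connectivity: connected, and still connected after deleting any one edge. -/
def TwoEdgeConnected (G : Multigraph V E) : Prop :=
  G.Connected ∧ ∀ e₀ : E, ∀ u w : V, Relation.ReflTransGen (G.AdjOn {e | e ≠ e₀}) u w

/-- Adjacency inside the induced subgraph on the vertex set `X`. -/
def AdjIn (G : Multigraph V E) (X : Set V) (u w : V) : Prop :=
  u ∈ X ∧ w ∈ X ∧ ∃ e, (G.src e = u ∧ G.dst e = w) ∨ (G.src e = w ∧ G.dst e = u)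

/-- Connectivity of the induced subgraph on the vertex set `X`. -/
def ConnectedOn (G : Multigraph V E) (X : Set V) : Prop :=
  ∀ u ∈ X, ∀ w ∈ X, Relation.ReflTransGen (G.AdjIn X) u w

/-- `T` is the edge set of a spanning tree of `G`:
the spanning subgraph with edge set `T` is connected and `|T| = |V| − 1`. -/
def IsSpanningTree [Fintype V] (G : Multigraph V E) (T : Finset E) : Prop :=
  (∀ u w : V, Relation.ReflTransGen (G.AdjOn (T : Set E)) u w) ∧ T.card + 1 = Fintype.card V

/-- `M` is the edge set of a spanning connected map-graph of `G`:
the spanning subgraph with edge set `M` is connected and has exactly `|V|` edges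
(equivalently, it is connected with exactly one cycle). -/
def IsConnectedSpanningMapGraph [Fintype V] (G : Multigraph V E) (M : Finset E) : Prop :=
  (∀ u w : V, Relation.ReflTransGen (G.AdjOn (M : Set E)) u w) ∧ M.card = Fintype.card V

/-- `(X, F)` describes a subgraph of `G`: every edge of `F` has both endpoints in `X`. -/
def IsSubgraphOn (G : Multigraph V E) (X : Finset V) (F : Finset E) : Prop :=
  ∀ e ∈ F, G.src e ∈ X ∧ G.dst e ∈ X

end Multigraph

namespace Multigraph
open Finset
variable {V E : Type}
section Aux
variable [Fintype V] [Fintype E] [DecidableEq V] [DecidableEq E] (G : Multigraph V E)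

set_option linter.unusedSectionVars false

lemma iCount_univ : G.iCount (univ : Finset V) = Fintype.card E := by
  unfold iCount
  rw [Finset.filter_true_of_mem (by simp)]
  exact Finset.card_univ

lemma handshake : ∑ v : V, G.degree v = 2 * Fintype.card E := by
  unfold degree
  rw [Finset.sum_add_distrib]
  have h1 : ∑ v : V, (univ.filter fun e => G.src e = v).card = Fintype.card E :=
    (Finset.card_eq_sum_card_fiberwise (f := G.src) (fun e _ => mem_univ _)).symm
  have h2 : ∑ v : V, (univ.filter fun e => G.dst e = v).card = Fintype.card E :=
    (Finset.card_eq_sum_card_fiberwise (f := G.dst) (fun e _ => mem_univ _)).symm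
  omega

lemma card_filter_subtype (e₀ : E) (q : E → Prop) [DecidablePred q] :
    (univ.filter fun e : {e : E // e ≠ e₀} => q e.1).card
      = (univ.filter fun e : E => e ≠ e₀ ∧ q e).card := by
  apply Finset.card_bij (fun a _ => a.1)
  · intro a ha
    simp only [mem_filter, mem_univ, true_and] at ha ⊢
    exact ⟨a.2, ha⟩
  · intro a _ b _ h; exact Subtype.ext h
  · intro b hb
    simp only [mem_filter, mem_univ, true_and] at hb
    exact ⟨⟨b, hb.1⟩, by simp [hb.2], rfl⟩

lemma deleteEdge_iCount (e₀ : E) (X : Finset V) :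
    (G.deleteEdge e₀).iCount X
      = ((univ.filter fun e : E => G.src e ∈ X ∧ G.dst e ∈ X).erase e₀).card := by
  simp only [iCount, deleteEdge]
  erw [card_filter_subtype (q := fun e => G.src e ∈ X ∧ G.dst e ∈ X)]
  congr 1
  ext e
  simp only [mem_filter, mem_erase, mem_univ, true_and, and_comm]

lemma iCount_supermod (X Y : Finset V) :
    G.iCount X + G.iCount Y ≤ G.iCount (X ∩ Y) + G.iCount (X ∪ Y) := by
  classical
  set A := univ.filter fun e => G.src e ∈ X ∧ G.dst e ∈ X with hA
  set B := univ.filter fun e => G.src e ∈ Y ∧ G.dst e ∈ Y with hB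
  have h1 : A ∩ B = univ.filter fun e => G.src e ∈ X ∩ Y ∧ G.dst e ∈ X ∩ Y := by
    ext e; simp only [hA, hB, mem_inter, mem_filter, mem_univ, true_and]; tauto
  have h2 : A ∪ B ⊆ univ.filter fun e => G.src e ∈ X ∪ Y ∧ G.dst e ∈ X ∪ Y := by
    intro e he
    simp only [hA, hB, mem_union, mem_filter, mem_univ, true_and] at he ⊢
    tauto
  have h3 : A.card + B.card = (A ∩ B).card + (A ∪ B).card := by
    rw [add_comm ((A ∩ B).card)]
    exact (Finset.card_union_add_card_inter A B).symm
  unfold iCount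
  rw [← hA, ← hB, h3, ← h1]
  exact Nat.add_le_add le_rfl (Finset.card_le_card h2)

lemma exists_edge_of_iCount_pos (X : Finset V) (h : 0 < G.iCount X) :
    ∃ e, G.src e ∈ X ∧ G.dst e ∈ X := by
  obtain ⟨e, he⟩ := Finset.card_pos.mp h
  exact ⟨e, (mem_filter.mp he).2⟩

lemma cardV_pos (hT : G.Tight 2 1) : 0 < Fintype.card V := by
  have h := hT.2
  have h0 : (0:ℤ) ≤ (Fintype.card E : ℤ) := Int.natCast_nonneg _
  omega

lemma degree_ge_three (hT : G.Tight 2 1) (hdeg : ∀ v : V, G.degree v ≠ 2) (v : V) :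
    3 ≤ G.degree v := by
  by_contra h
  push_neg at h
  have hd : G.degree v ≤ 1 := by have := hdeg v; omega
  have hV1 : 1 ≤ Fintype.card V := cardV_pos G hT
  by_cases hV : Fintype.card V = 1
  · have hE1 : Fintype.card E = 1 := by have := hT.2; omega
    have hall : ∀ w : V, w = v := fun w =>
      Fintype.card_le_one_iff.mp (le_of_eq hV) w v
    have h1 : (univ.filter fun e => G.src e = v) = univ :=
      Finset.filter_true_of_mem (fun e _ => hall _)
    have h2 : (univ.filter fun e => G.dst e = v) = univ :=
      Finset.filter_true_of_mem (fun e _ => hall _)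
    have : G.degree v = 2 := by
      unfold degree; rw [h1, h2, card_univ, hE1]
    exact hdeg v this
  · set X := univ.erase v with hXdef
    have hXcard : X.card = Fintype.card V - 1 := by
      rw [hXdef, card_erase_of_mem (mem_univ v), card_univ]
    have hfilter : (univ.filter fun e => G.src e ∈ X ∧ G.dst e ∈ X)
        = univ \ (univ.filter fun e => G.src e = v ∨ G.dst e = v) := by
      ext e
      simp only [hXdef, mem_filter, mem_univ, true_and, mem_erase, mem_sdiff, not_or]
      tauto
    have hinc : (univ.filter fun e => G.src e = v ∨ G.dst e = v).card ≤ G.degree v := by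
      rw [Finset.filter_or]
      exact Finset.card_union_le _ _
    have hsub := Finset.filter_subset (fun e => G.src e = v ∨ G.dst e = v) (univ : Finset E)
    have hiX : Fintype.card E ≤ G.iCount X + G.degree v := by
      unfold iCount
      rw [hfilter, card_sdiff_of_subset hsub, ← card_univ (α := E)]
      have := Finset.card_le_card hsub
      rw [card_univ]
      omega
    have hEcard := hT.2
    have hpos : 0 < G.iCount X := by omega
    have hsp := hT.1 X (G.exists_edge_of_iCount_pos X hpos)
    omega

lemma exists_two_deg3 (hT : G.Tight 2 1) (hdeg : ∀ v : V, G.degree v ≠ 2) :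
    ∃ v₁ v₂ : V, v₁ ≠ v₂ ∧ G.degree v₁ = 3 ∧ G.degree v₂ = 3 := by
  have hsum := G.handshake
  have hE := hT.2
  have hVpos := G.cardV_pos hT
  have hmin := G.degree_ge_three hT hdeg
  have h1 : ∃ v : V, G.degree v < 4 := by
    by_contra h
    push_neg at h
    have hge : 4 * Fintype.card V ≤ ∑ v : V, G.degree v := by
      calc 4 * Fintype.card V = ∑ _v : V, 4 := by
            rw [Finset.sum_const, card_univ]; ring
        _ ≤ ∑ v : V, G.degree v := Finset.sum_le_sum fun v _ => h v
    omega
  obtain ⟨v₁, hv₁⟩ := h1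
  have hv₁3 : G.degree v₁ = 3 := by have := hmin v₁; omega
  have h2 : ∃ v ∈ univ.erase v₁, G.degree v < 4 := by
    by_contra h
    push_neg at h
    have hge : (Fintype.card V - 1) * 4 ≤ ∑ v ∈ univ.erase v₁, G.degree v := by
      calc (Fintype.card V - 1) * 4 = ∑ _v ∈ univ.erase v₁, 4 := by
            rw [Finset.sum_const, card_erase_of_mem (mem_univ v₁), card_univ, smul_eq_mul]
        _ ≤ _ := Finset.sum_le_sum fun v hv => h v hv
    have hsplit : ∑ v ∈ univ.erase v₁, G.degree v + G.degree v₁ = ∑ v : V, G.degree v :=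
      Finset.sum_erase_add _ _ (mem_univ v₁)
    omega
  obtain ⟨v₂, hv₂mem, hv₂⟩ := h2
  have hne : v₂ ≠ v₁ := (mem_erase.mp hv₂mem).1
  exact ⟨v₁, v₂, hne.symm, hv₁3, by have := hmin v₂; omega⟩


lemma crit_mem (e₀ : E) (h22 : (G.deleteEdge e₀).Tight 2 2) (X : Finset V)
    (hX : (G.iCount X : ℤ) = 2 * (X.card : ℤ) - 1) :
    G.src e₀ ∈ X ∧ G.dst e₀ ∈ X := by
  by_contra hmem
  have hne : e₀ ∉ (univ.filter fun e => G.src e ∈ X ∧ G.dst e ∈ X) := by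
    intro h; exact hmem (mem_filter.mp h).2
  have hdel : (G.deleteEdge e₀).iCount X = G.iCount X := by
    rw [deleteEdge_iCount, Finset.erase_eq_of_notMem hne]; rfl
  have hpos : 0 < G.iCount X := by
    have : (0:ℤ) ≤ (X.card : ℤ) := Int.natCast_nonneg _
    omega
  obtain ⟨e, he⟩ := G.exists_edge_of_iCount_pos X hpos
  have hee₀ : e ≠ e₀ := fun h => hmem (h ▸ he)
  have hsp := h22.1 X ⟨⟨e, hee₀⟩, he⟩
  rw [hdel] at hsp
  omega

lemma crit_inter (e₀ : E) (hT : G.Tight 2 1) (h22 : (G.deleteEdge e₀).Tight 2 2)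
    (X Y : Finset V)
    (hX : (G.iCount X : ℤ) = 2 * (X.card : ℤ) - 1)
    (hY : (G.iCount Y : ℤ) = 2 * (Y.card : ℤ) - 1) :
    (G.iCount (X ∩ Y) : ℤ) = 2 * ((X ∩ Y).card : ℤ) - 1 := by
  obtain ⟨hsX, hdX⟩ := G.crit_mem e₀ h22 X hX
  obtain ⟨hsY, hdY⟩ := G.crit_mem e₀ h22 Y hY
  have hsup := G.iCount_supermod X Y
  have h1 := hT.1 (X ∩ Y) ⟨e₀, by simp [mem_inter, hsX, hdX, hsY, hdY]⟩
  have h2 := hT.1 (X ∪ Y) ⟨e₀, by simp [mem_union, hsX, hdX]⟩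
  have hcard : (X ∩ Y).card + (X ∪ Y).card = X.card + Y.card :=
    Finset.card_inter_add_card_union X Y
  omega

lemma delete_tight (hT : G.Tight 2 1) (e₀ : E) (h22 : (G.deleteEdge e₀).Tight 2 2)
    (Xs : Finset V) (hXs : (G.iCount Xs : ℤ) = 2 * (Xs.card : ℤ) - 1)
    (hmin : ∀ Y : Finset V, (G.iCount Y : ℤ) = 2 * (Y.card : ℤ) - 1 → Xs.card ≤ Y.card)
    (e : E) (he : G.src e ∈ Xs ∧ G.dst e ∈ Xs) : (G.deleteEdge e).Tight 2 2 := by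
  constructor
  · intro X hX
    obtain ⟨e', he'⟩ := hX
    have hsp := hT.1 X ⟨e'.1, he'⟩
    by_cases hcrit : (G.iCount X : ℤ) = 2 * (X.card : ℤ) - 1
    · have hic := G.crit_inter e₀ hT h22 X Xs hcrit hXs
      have hc := hmin _ hic
      have hXXs : X ∩ Xs = Xs :=
        Finset.eq_of_subset_of_card_le Finset.inter_subset_right hc
      have hsub : Xs ⊆ X := by rw [← hXXs]; exact Finset.inter_subset_left
      have hmemf : e ∈ univ.filter fun e' => G.src e' ∈ X ∧ G.dst e' ∈ X :=
        mem_filter.mpr ⟨mem_univ _, hsub he.1, hsub he.2⟩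
      have hcount : (G.deleteEdge e).iCount X + 1 = G.iCount X := by
        rw [deleteEdge_iCount]
        exact Finset.card_erase_add_one hmemf
      omega
    · have hle : (G.deleteEdge e).iCount X ≤ G.iCount X := by
        rw [deleteEdge_iCount]
        exact Finset.card_le_card (Finset.erase_subset _ _)
      omega
  · have hEpos : 0 < Fintype.card E := Fintype.card_pos_iff.mpr ⟨e⟩
    have hcard : Fintype.card {e' : E // e' ≠ e} = Fintype.card E - 1 := by
      rw [Fintype.card_subtype]
      have h2 : (univ.filter fun e' : E => e' ≠ e) = univ.erase e := by
        ext e'; simp [mem_erase]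
      rw [h2, card_erase_of_mem (mem_univ e), card_univ]
    have hE := hT.2
    rw [hcard]
    omega

end Aux

end Multigraph


/-- A `P(2,1)`-graph not equal to `K₂³` and with no vertex of
degree 2 has a degree-3 vertex `v` and an edge `e` not incident to `v` such that
`G − e` is `(2,2)`-tight. -/
theorem statement_10 {V E : Type} [Fintype V] [Fintype E] [DecidableEq V] [DecidableEq E]
    (G : Multigraph V E) (hG : G.IsP21) (hK : ¬ G.IsK23)
    (hdeg : ∀ v : V, G.degree v ≠ 2) :
    ∃ (v : V) (e : E), G.degree v = 3 ∧ G.src e ≠ v ∧ G.dst e ≠ v ∧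
      (G.deleteEdge e).Tight 2 2 := by
  classical
  obtain ⟨hT, e₀, h22⟩ := hG
  obtain ⟨v₁, v₂, hne, h3₁, h3₂⟩ := G.exists_two_deg3 hT hdeg
  -- minimum critical set
  have hunivS : (G.iCount (Finset.univ : Finset V) : ℤ)
      = 2 * ((Finset.univ : Finset V).card : ℤ) - 1 := by
    rw [G.iCount_univ, Finset.card_univ]; exact hT.2
  set S : Finset (Finset V) :=
    Finset.univ.filter (fun X : Finset V => (G.iCount X : ℤ) = 2 * (X.card : ℤ) - 1) with hSdef
  obtain ⟨Xs, hXsS, hminS⟩ := Finset.exists_min_image S Finset.card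
    ⟨Finset.univ, Finset.mem_filter.mpr ⟨Finset.mem_univ _, hunivS⟩⟩
  have hXs : (G.iCount Xs : ℤ) = 2 * (Xs.card : ℤ) - 1 := (Finset.mem_filter.mp hXsS).2
  have hmin : ∀ Y : Finset V, (G.iCount Y : ℤ) = 2 * (Y.card : ℤ) - 1 → Xs.card ≤ Y.card :=
    fun Y hY => hminS Y (Finset.mem_filter.mpr ⟨Finset.mem_univ _, hY⟩)
  have he₀ : G.src e₀ ∈ Xs ∧ G.dst e₀ ∈ Xs := G.crit_mem e₀ h22 Xs hXs
  by_cases hc₁ : ∃ e, (G.src e ∈ Xs ∧ G.dst e ∈ Xs) ∧ G.src e ≠ v₁ ∧ G.dst e ≠ v₁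
  · obtain ⟨e, hin, hs, hd⟩ := hc₁
    exact ⟨v₁, e, h3₁, hs, hd, G.delete_tight hT e₀ h22 Xs hXs hmin e hin⟩
  by_cases hc₂ : ∃ e, (G.src e ∈ Xs ∧ G.dst e ∈ Xs) ∧ G.src e ≠ v₂ ∧ G.dst e ≠ v₂
  · obtain ⟨e, hin, hs, hd⟩ := hc₂
    exact ⟨v₂, e, h3₂, hs, hd, G.delete_tight hT e₀ h22 Xs hXs hmin e hin⟩
  exfalso
  have hpat : ∀ e, (G.src e ∈ Xs ∧ G.dst e ∈ Xs) →
      (G.src e = v₁ ∧ G.dst e = v₂) ∨ (G.src e = v₂ ∧ G.dst e = v₁) := by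
    intro e hin
    have h1' : G.src e = v₁ ∨ G.dst e = v₁ := by
      by_contra hcon; push_neg at hcon; exact hc₁ ⟨e, hin, hcon.1, hcon.2⟩
    have h2' : G.src e = v₂ ∨ G.dst e = v₂ := by
      by_contra hcon; push_neg at hcon; exact hc₂ ⟨e, hin, hcon.1, hcon.2⟩
    rcases h1' with h | h <;> rcases h2' with h' | h'
    · exact absurd (h.symm.trans h') hne
    · exact Or.inl ⟨h, h'⟩
    · exact Or.inr ⟨h', h⟩
    · exact absurd (h.symm.trans h') hne
  have hvXs : v₁ ∈ Xs ∧ v₂ ∈ Xs := by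
    rcases hpat e₀ he₀ with ⟨h1, h2⟩ | ⟨h1, h2⟩
    · exact ⟨h1 ▸ he₀.1, h2 ▸ he₀.2⟩
    · exact ⟨h2 ▸ he₀.2, h1 ▸ he₀.1⟩
  set A : Finset E := Finset.univ.filter (fun e => G.src e ∈ Xs ∧ G.dst e ∈ Xs) with hAdef
  have hAi : A.card = G.iCount Xs := rfl
  have hsubB : A ⊆ Finset.univ.filter (fun e => G.src e = v₁ ∨ G.dst e = v₁) := by
    intro e heA
    have hin := (Finset.mem_filter.mp heA).2
    refine Finset.mem_filter.mpr ⟨Finset.mem_univ _, ?_⟩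
    rcases hpat e hin with ⟨h1, _⟩ | ⟨_, h2⟩
    · exact Or.inl h1
    · exact Or.inr h2
  have hB1card : (Finset.univ.filter (fun e => G.src e = v₁ ∨ G.dst e = v₁)).card ≤ 3 := by
    rw [Finset.filter_or]
    calc _ ≤ _ := Finset.card_union_le _ _
      _ = 3 := h3₁
  have hA3 : A.card ≤ 3 := le_trans (Finset.card_le_card hsubB) hB1card
  have hpair : ({v₁, v₂} : Finset V) ⊆ Xs := by
    intro a ha
    rcases Finset.mem_insert.mp ha with rfl | ha
    · exact hvXs.1
    · rcases Finset.mem_singleton.mp ha with rfl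
      exact hvXs.2
  have hpaircard : ({v₁, v₂} : Finset V).card = 2 := Finset.card_pair hne
  have h2le : 2 ≤ Xs.card := by
    calc 2 = ({v₁, v₂} : Finset V).card := hpaircard.symm
      _ ≤ Xs.card := Finset.card_le_card hpair
  have hXs2 : Xs.card = 2 := by omega
  have hXseq : Xs = ({v₁, v₂} : Finset V) :=
    (Finset.eq_of_subset_of_card_le hpair (by omega)).symm
  have hA3' : A.card = 3 := by omega
  -- every edge incident to v₁ or v₂ lies inside Xs
  have hAB1 : A = Finset.univ.filter (fun e => G.src e = v₁ ∨ G.dst e = v₁) :=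
    Finset.eq_of_subset_of_card_le hsubB (by omega)
  have hsubB2 : A ⊆ Finset.univ.filter (fun e => G.src e = v₂ ∨ G.dst e = v₂) := by
    intro e heA
    have hin := (Finset.mem_filter.mp heA).2
    refine Finset.mem_filter.mpr ⟨Finset.mem_univ _, ?_⟩
    rcases hpat e hin with ⟨_, h2⟩ | ⟨h1, _⟩
    · exact Or.inr h2
    · exact Or.inl h1
  have hB2card : (Finset.univ.filter (fun e => G.src e = v₂ ∨ G.dst e = v₂)).card ≤ 3 := by
    rw [Finset.filter_or]
    calc _ ≤ _ := Finset.card_union_le _ _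
      _ = 3 := h3₂
  have hAB2 : A = Finset.univ.filter (fun e => G.src e = v₂ ∨ G.dst e = v₂) :=
    Finset.eq_of_subset_of_card_le hsubB2 (by omega)
  have hnotA : ∀ e, e ∉ A → G.src e ∉ Xs ∧ G.dst e ∉ Xs := by
    intro e heA
    constructor
    · intro hs
      rw [hXseq] at hs
      rcases Finset.mem_insert.mp hs with rfl | hs
      · exact heA (by rw [hAB1]; exact Finset.mem_filter.mpr ⟨Finset.mem_univ _, Or.inl rfl⟩)
      · rcases Finset.mem_singleton.mp hs with rfl
        exact heA (by rw [hAB2]; exact Finset.mem_filter.mpr ⟨Finset.mem_univ _, Or.inl rfl⟩)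
    · intro hd
      rw [hXseq] at hd
      rcases Finset.mem_insert.mp hd with rfl | hd
      · exact heA (by rw [hAB1]; exact Finset.mem_filter.mpr ⟨Finset.mem_univ _, Or.inr rfl⟩)
      · rcases Finset.mem_singleton.mp hd with rfl
        exact heA (by rw [hAB2]; exact Finset.mem_filter.mpr ⟨Finset.mem_univ _, Or.inr rfl⟩)
  have hE := hT.2
  by_cases hV2 : Fintype.card V ≤ 2
  · -- G is K₂³
    apply hK
    have hXuniv : Xs = Finset.univ := by
      apply Finset.eq_of_subset_of_card_le (Finset.subset_univ Xs)
      rw [Finset.card_univ]; omega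
    have hallv : ∀ v : V, v = v₁ ∨ v = v₂ := by
      intro v
      have : v ∈ Xs := hXuniv ▸ Finset.mem_univ v
      rw [hXseq] at this
      rcases Finset.mem_insert.mp this with rfl | hv
      · exact Or.inl rfl
      · exact Or.inr (Finset.mem_singleton.mp hv)
    have hinall : ∀ e : E, G.src e ∈ Xs ∧ G.dst e ∈ Xs := by
      intro e; rw [hXuniv]; exact ⟨Finset.mem_univ _, Finset.mem_univ _⟩
    have hEcard : Fintype.card E = 3 := by
      have hVc : Fintype.card V = 2 := by
        have : 2 ≤ Fintype.card V := by
          have h1 : v₁ ∈ Finset.univ := Finset.mem_univ v₁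
          calc 2 = ({v₁, v₂} : Finset V).card := hpaircard.symm
            _ ≤ Finset.univ.card := Finset.card_le_card (Finset.subset_univ _)
            _ = Fintype.card V := Finset.card_univ
        omega
      omega
    exact ⟨v₁, v₂, hne, hallv, hEcard, fun e => hpat e (hinall e)⟩
  · -- |V| ≥ 3 : contradiction with sparsity on the complement
    set Y : Finset V := Finset.univ \ Xs with hYdef
    have hYcard : Y.card = Fintype.card V - 2 := by
      rw [hYdef, Finset.card_sdiff_of_subset (Finset.subset_univ _), Finset.card_univ, hXs2]
    have hYfilter : (Finset.univ.filter fun e => G.src e ∈ Y ∧ G.dst e ∈ Y)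
        = Finset.univ \ A := by
      ext e
      simp only [hYdef, Finset.mem_filter, Finset.mem_univ, true_and, Finset.mem_sdiff]
      constructor
      · rintro ⟨hs, _⟩ heA
        exact hs (Finset.mem_filter.mp heA).2.1
      · exact fun heA => hnotA e heA
    have hYcount : G.iCount Y = Fintype.card E - 3 := by
      unfold Multigraph.iCount
      rw [hYfilter, Finset.card_sdiff_of_subset (Finset.subset_univ _), Finset.card_univ, hA3']
    have hVpos : 2 < Fintype.card V := by omega
    have hEc : Fintype.card E = 2 * Fintype.card V - 1 := by omega
    have hYpos : 0 < G.iCount Y := by omega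
    have hsp := hT.1 Y (G.exists_edge_of_iCount_pos Y hYpos)
    omega
end

section
/- Let G = (V,E) be a (2,2)-circuit. Then either G = K₂³, or for every vertex v of G of degree 3 there exist two distinct vertices u, w ∈ N(v) such that the multigraph obtained from G − v by adding one new edge with endpoints u and w is a P(2,1)-graph. -/
section Helpers

lemma filter_subtype_card' {E : Type} [Fintype E] (q : E → Prop) [DecidablePred q]
    (p : E → Prop) [DecidablePred p] :
    (Finset.univ.filter fun x : {e // q e} => p x.1).card
      = (Finset.univ.filter fun e => q e ∧ p e).card := by
  rw [← Fintype.card_subtype, ← Fintype.card_subtype]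
  exact Fintype.card_congr (Equiv.subtypeSubtypeEquivSubtypeInter q (fun e => p e))

lemma filter_sum_card' {E : Type} [Fintype E] (p : E ⊕ Unit → Prop) [DecidablePred p] :
    (Finset.univ.filter p).card
      = (Finset.univ.filter fun e => p (Sum.inl e)).card + (if p (Sum.inr ()) then 1 else 0) := by
  rw [← Fintype.card_subtype, ← Fintype.card_subtype]
  rw [Fintype.card_congr (Equiv.subtypeSum (p := p)), Fintype.card_sum]
  congr 1
  rw [Fintype.card_subtype]
  by_cases h : p (Sum.inr ()) <;> simp [h, Finset.filter_eq_self, Finset.filter_eq_empty_iff]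

lemma card_subtype_ne' {E : Type} [Fintype E] [DecidableEq E] (a : E) :
    Fintype.card {x // x ≠ a} = Fintype.card E - 1 := by
  rw [Fintype.card_subtype_compl, Fintype.card_subtype_eq]

namespace Multigraph

variable {V E : Type}

lemma iCount_deleteEdge' [Fintype E] [DecidableEq V] [DecidableEq E]
    (G : Multigraph V E) (e₀ : E) (X : Finset V) :
    (G.deleteEdge e₀).iCount X
      = (Finset.univ.filter fun e => e ≠ e₀ ∧ (G.src e ∈ X ∧ G.dst e ∈ X)).card := by
  exact filter_subtype_card' (fun e => e ≠ e₀) (fun e => G.src e ∈ X ∧ G.dst e ∈ X)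

lemma mem_image_val {v : V} [DecidableEq V] (X : Finset {a : V // a ≠ v}) (x : V) (h : x ≠ v) :
    x ∈ X.image Subtype.val ↔ (⟨x, h⟩ : {a : V // a ≠ v}) ∈ X := by
  simp only [Finset.mem_image]
  constructor
  · rintro ⟨a, ha, h2⟩
    have : a = ⟨x, h⟩ := Subtype.ext h2
    exact this ▸ ha
  · intro hx
    exact ⟨⟨x, h⟩, hx, rfl⟩

lemma not_mem_image_val {v : V} [DecidableEq V] (X : Finset {a : V // a ≠ v}) :
    v ∉ X.image Subtype.val := by
  simp only [Finset.mem_image]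
  rintro ⟨a, _, h⟩
  exact a.2 h

lemma iCount_deleteVertex [Fintype E] [DecidableEq V]
    (G : Multigraph V E) (v : V) (X : Finset {a : V // a ≠ v}) :
    (G.deleteVertex v).iCount X = G.iCount (X.image Subtype.val) := by
  classical
  have hXv := not_mem_image_val X
  unfold iCount deleteVertex
  have h1 : (Finset.univ.filter fun x : {e // G.src e ≠ v ∧ G.dst e ≠ v} =>
      (⟨G.src x.1, x.2.1⟩ : {a : V // a ≠ v}) ∈ X ∧ (⟨G.dst x.1, x.2.2⟩ : {a : V // a ≠ v}) ∈ X)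
      = Finset.univ.filter fun x : {e // G.src e ≠ v ∧ G.dst e ≠ v} =>
        (G.src x.1 ∈ X.image Subtype.val ∧ G.dst x.1 ∈ X.image Subtype.val) := by
    apply Finset.filter_congr
    intro x _
    rw [mem_image_val X _ x.2.1, mem_image_val X _ x.2.2]
  rw [h1]
  have h2 := filter_subtype_card' (fun e => G.src e ≠ v ∧ G.dst e ≠ v)
      (fun e => G.src e ∈ X.image Subtype.val ∧ G.dst e ∈ X.image Subtype.val)
  rw [h2]
  congr 1
  apply Finset.filter_congr
  intro e _
  simp only [Finset.mem_univ, true_and, and_iff_right_iff_imp]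
  intro he
  exact ⟨fun h => hXv (h ▸ he.1), fun h => hXv (h ▸ he.2)⟩

lemma iCount_addEdge [Fintype E] [DecidableEq V]
    (G : Multigraph V E) (u w : V) (X : Finset V) :
    (G.addEdge u w).iCount X = G.iCount X + (if u ∈ X ∧ w ∈ X then 1 else 0) := by
  unfold iCount addEdge
  rw [filter_sum_card']
  simp
  congr

lemma iCount_deleteEdge_addEdge [Fintype E] [DecidableEq V] [DecidableEq E]
    (G : Multigraph V E) (u w : V) (X : Finset V) :
    ((G.addEdge u w).deleteEdge (Sum.inr ())).iCount X = G.iCount X := by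
  classical
  rw [iCount_deleteEdge']
  have h2 := filter_sum_card' (fun x : E ⊕ Unit => x ≠ Sum.inr () ∧
      ((G.addEdge u w).src x ∈ X ∧ (G.addEdge u w).dst x ∈ X))
  rw [h2]
  simp [iCount, addEdge]

end Multigraph

end Helpers

namespace Multigraph

lemma circuit_no_loop {V E : Type} [Fintype V] [Fintype E] [DecidableEq V] [DecidableEq E]
    (G : Multigraph V E) (hG : G.IsCircuit22) (hE : 2 ≤ Fintype.card E) (e : E) :
    G.src e ≠ G.dst e := by
  intro h
  obtain ⟨e', he'⟩ : ∃ e' : E, e' ≠ e := Fintype.exists_ne_of_one_lt_card (by omega) e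
  have hs := (hG.2 e').1 {G.src e} ⟨⟨e, Ne.symm he'⟩, by simp [Multigraph.deleteEdge], by simp [Multigraph.deleteEdge, ← h]⟩
  rw [iCount_deleteEdge'] at hs
  have h1 : 1 ≤ (Finset.univ.filter fun f => f ≠ e' ∧
      (G.src f ∈ ({G.src e} : Finset V) ∧ G.dst f ∈ ({G.src e} : Finset V))).card := by
    apply Finset.card_pos.mpr
    exact ⟨e, by simp [Ne.symm he', ← h]⟩
  simp only [Finset.card_singleton] at hs
  omega

lemma circuit_proper {V E : Type} [Fintype V] [Fintype E] [DecidableEq V] [DecidableEq E]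
    (G : Multigraph V E) (hG : G.IsCircuit22) (v : V)
    (hinc : ∃ e₀, G.src e₀ = v ∨ G.dst e₀ = v)
    (X : Finset V) (hv : v ∉ X) (hspan : ∃ f, G.src f ∈ X ∧ G.dst f ∈ X) :
    (G.iCount X : ℤ) ≤ 2 * (X.card : ℤ) - 2 := by
  obtain ⟨e₀, he₀⟩ := hinc
  obtain ⟨f, hf1, hf2⟩ := hspan
  have hne : f ≠ e₀ := by
    rintro rfl
    rcases he₀ with h | h
    · exact hv (h ▸ hf1)
    · exact hv (h ▸ hf2)
  have hs := (hG.2 e₀).1 X ⟨⟨f, hne⟩, hf1, hf2⟩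
  rw [iCount_deleteEdge'] at hs
  have hcount : G.iCount X = (Finset.univ.filter fun g => g ≠ e₀ ∧
      (G.src g ∈ X ∧ G.dst g ∈ X)).card := by
    unfold iCount
    congr 1
    apply Finset.filter_congr
    intro g _
    constructor
    · intro hg
      refine ⟨?_, hg⟩
      rintro rfl
      rcases he₀ with h | h
      · exact hv (h ▸ hg.1)
      · exact hv (h ▸ hg.2)
    · exact And.right
  rw [hcount]
  exact hs

end Multigraph


/-- For a `(2,2)`-circuit `G`, either `G = K₂³` or for every degree-3
vertex `v` there are distinct `u, w ∈ N(v)` such that `G − v` plus a new edge `uw` is a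
`P(2,1)`-graph. -/
theorem statement_12 {V E : Type} [Fintype V] [Fintype E] [DecidableEq V] [DecidableEq E]
    (G : Multigraph V E) (hG : G.IsCircuit22) :
    G.IsK23 ∨
      ∀ v : V, G.degree v = 3 →
        ∃ u w : {a : V // a ≠ v}, (u : V) ∈ G.neighborSet v ∧ (w : V) ∈ G.neighborSet v ∧
          u ≠ w ∧ ((G.deleteVertex v).addEdge u w).IsP21 := by
  classical
  by_cases hK : G.IsK23
  · exact Or.inl hK
  right
  intro v hdeg
  have hdeg' : (Finset.univ.filter fun e => G.src e = v).card
      + (Finset.univ.filter fun e => G.dst e = v).card = 3 := hdeg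
  have hE2 : 2 ≤ Fintype.card E := by
    have hA' := Finset.card_filter_le Finset.univ fun e => G.src e = v
    have hB' := Finset.card_filter_le Finset.univ fun e => G.dst e = v
    rw [Finset.card_univ] at hA' hB'
    omega
  have hnl : ∀ e, G.src e ≠ G.dst e := G.circuit_no_loop hG hE2
  have hScard : (Finset.univ.filter fun e => G.src e = v ∨ G.dst e = v).card = 3 := by
    rw [Finset.filter_or, Finset.card_union_of_disjoint, hdeg']
    rw [Finset.disjoint_filter]
    intro e _ h1 h2
    exact hnl e (h1.trans h2.symm)
  have hE3 : 3 ≤ Fintype.card E := by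
    have h := Finset.card_filter_le Finset.univ fun e => G.src e = v ∨ G.dst e = v
    rw [Finset.card_univ, hScard] at h
    exact h
  have hVpos : 1 ≤ Fintype.card V := Fintype.card_pos_iff.mpr ⟨v⟩
  set other : E → V := fun e => if G.src e = v then G.dst e else G.src e with hodef
  have hother : ∀ e, (G.src e = v ∨ G.dst e = v) → other e ≠ v ∧
      ((G.src e = v ∧ G.dst e = other e) ∨ (G.src e = other e ∧ G.dst e = v)) := by
    intro e h
    by_cases h' : G.src e = v
    · have ho : other e = G.dst e := by rw [hodef]; simp [h']
      rw [ho]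
      exact ⟨fun hh => hnl e (h'.trans hh.symm), Or.inl ⟨h', rfl⟩⟩
    · have hd : G.dst e = v := by tauto
      have ho : other e = G.src e := by rw [hodef]; simp [h']
      rw [ho]
      exact ⟨fun hh => hnl e (hh.trans hd.symm), Or.inr ⟨rfl, hd⟩⟩
  have hinc : ∃ e₀, G.src e₀ = v ∨ G.dst e₀ = v := by
    have h : (Finset.univ.filter fun e => G.src e = v ∨ G.dst e = v).Nonempty := by
      rw [← Finset.card_pos, hScard]; omega
    obtain ⟨e, he⟩ := h
    exact ⟨e, (Finset.mem_filter.mp he).2⟩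
  by_cases hcase : ∃ e g, (G.src e = v ∨ G.dst e = v) ∧ (G.src g = v ∨ G.dst g = v) ∧
      other e ≠ other g
  · -- main case: two distinct neighbours
    obtain ⟨e, f, hie, hif, hufne⟩ := hcase
    obtain ⟨hu1, hu2⟩ := hother e hie
    obtain ⟨hw1, hw2⟩ := hother f hif
    refine ⟨⟨other e, hu1⟩, ⟨other f, hw1⟩, ⟨e, hu2⟩, ⟨f, hw2⟩,
      fun h => hufne (congrArg Subtype.val h), ?_⟩
    have hWcard : Fintype.card {a : V // a ≠ v} = Fintype.card V - 1 := card_subtype_ne' v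
    have hEvcard : Fintype.card {e : E // G.src e ≠ v ∧ G.dst e ≠ v} = Fintype.card E - 3 := by
      rw [Fintype.card_subtype]
      have h1 : (Finset.univ.filter fun e : E => G.src e ≠ v ∧ G.dst e ≠ v)
          = Finset.univ \ (Finset.univ.filter fun e : E => G.src e = v ∨ G.dst e = v) := by
        rw [← Finset.filter_not]
        apply Finset.filter_congr
        intro g _
        constructor
        · intro hg
          tauto
        · intro hg
          tauto
      rw [h1, Finset.card_sdiff_of_subset (Finset.filter_subset _ _), Finset.card_univ, hScard]
    have hsparse : ∀ X : Finset {a : V // a ≠ v},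
        (∃ g, G.src g ∈ X.image Subtype.val ∧ G.dst g ∈ X.image Subtype.val) →
        (G.iCount (X.image Subtype.val) : ℤ) ≤ 2 * (X.card : ℤ) - 2 := by
      intro X hg
      have h := G.circuit_proper hG v hinc _ (Multigraph.not_mem_image_val X) hg
      rwa [Finset.card_image_of_injective _ Subtype.val_injective] at h
    refine ⟨⟨?_, ?_⟩, Sum.inr (), ?_, ?_⟩
    · -- Sparse 2 1
      rintro X ⟨x, hx1, hx2⟩
      rw [Multigraph.iCount_addEdge, Multigraph.iCount_deleteVertex]
      have hX1 : 1 ≤ X.card := Finset.card_pos.mpr ⟨_, hx1⟩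
      by_cases hz : G.iCount (X.image Subtype.val) = 0
      · rw [hz]
        split_ifs <;> push_cast <;> omega
      · have hspan : ∃ g, G.src g ∈ X.image Subtype.val ∧ G.dst g ∈ X.image Subtype.val := by
          obtain ⟨g, hg⟩ := Finset.card_pos.mp (Nat.pos_of_ne_zero hz)
          rw [Finset.mem_filter] at hg
          exact ⟨g, hg.2⟩
        have hb := hsparse X hspan
        split_ifs <;> push_cast <;> omega
    · -- card for Tight 2 1
      rw [Fintype.card_sum, hEvcard, hWcard, Fintype.card_unit]
      have h1 := hG.1
      omega
    · -- Sparse 2 2 after deleting the new edge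
      rintro X ⟨⟨(g | uu), hy⟩, hx1, hx2⟩
      · rw [Multigraph.iCount_deleteEdge_addEdge, Multigraph.iCount_deleteVertex]
        apply hsparse
        exact ⟨g.1, (Multigraph.mem_image_val X _ g.2.1).mpr hx1,
          (Multigraph.mem_image_val X _ g.2.2).mpr hx2⟩
      · cases uu
        exact absurd rfl hy
    · -- card for Tight 2 2
      rw [card_subtype_ne', Fintype.card_sum, hEvcard, hWcard, Fintype.card_unit]
      have h1 := hG.1
      omega
  · -- K₂³ case
    exfalso
    apply hK
    push_neg at hcase
    obtain ⟨e₁, he₁⟩ := hinc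
    obtain ⟨hu1, _⟩ := hother e₁ he₁
    set u := other e₁ with hu
    have hXspan : ∀ e, (G.src e = v ∨ G.dst e = v) →
        G.src e ∈ ({u, v} : Finset V) ∧ G.dst e ∈ ({u, v} : Finset V) := by
      intro e he
      have h2 := (hother e he).2
      rw [hcase e e₁ he he₁] at h2
      rcases h2 with ⟨h3, h4⟩ | ⟨h3, h4⟩ <;> rw [h3, h4] <;> simp [hu]
    have hVuv : ∀ x : V, x = u ∨ x = v := by
      intro x
      by_contra hx
      push_neg at hx
      have hV3 : 3 ≤ Fintype.card V := by
        have hc : ({x, u, v} : Finset V).card = 3 := by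
          rw [Finset.card_insert_of_notMem (by simp [hx.1, hx.2]),
            Finset.card_insert_of_notMem (by simp [hu1]), Finset.card_singleton]
        calc 3 = ({x, u, v} : Finset V).card := hc.symm
          _ ≤ Fintype.card V := Finset.card_le_univ _
      have hSsub : ∀ e, (G.src e = v ∨ G.dst e = v) → e ∈ Finset.univ.filter
          fun g => G.src g ∈ ({u, v} : Finset V) ∧ G.dst g ∈ ({u, v} : Finset V) := by
        intro e he
        exact Finset.mem_filter.mpr ⟨Finset.mem_univ e, hXspan e he⟩
      by_cases hall : ∀ e : E, G.src e ∈ ({u, v} : Finset V) ∧ G.dst e ∈ ({u, v} : Finset V)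
      · -- all edges lie inside {u, v}
        obtain ⟨f₂, hf₂⟩ : ∃ f₂, f₂ ≠ e₁ := Fintype.exists_ne_of_one_lt_card (by omega) e₁
        have hs := (hG.2 e₁).1 {u, v} ⟨⟨f₂, hf₂⟩, (hall f₂).1, (hall f₂).2⟩
        rw [Multigraph.iCount_deleteEdge'] at hs
        have hfe : (Finset.univ.filter fun g => g ≠ e₁ ∧
            (G.src g ∈ ({u, v} : Finset V) ∧ G.dst g ∈ ({u, v} : Finset V)))
            = Finset.univ.erase e₁ := by
          rw [← Finset.filter_ne']
          apply Finset.filter_congr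
          intro g _
          simp [hall g]
        rw [hfe, Finset.card_erase_of_mem (Finset.mem_univ e₁), Finset.card_univ] at hs
        have hc2 : ({u, v} : Finset V).card = 2 := by
          rw [Finset.card_insert_of_notMem (by simp [hu1]), Finset.card_singleton]
        rw [hc2] at hs
        have h1 := hG.1
        omega
      · -- some edge leaves {u, v}
        push_neg at hall
        obtain ⟨e', he'⟩ := hall
        have he'S : ¬(G.src e' = v ∨ G.dst e' = v) := fun h =>
          he' (hXspan e' h).1 (hXspan e' h).2
        have hs := (hG.2 e').1 {u, v} ⟨⟨e₁, fun h => he'S (h ▸ he₁)⟩,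
          (hXspan e₁ he₁).1, (hXspan e₁ he₁).2⟩
        rw [Multigraph.iCount_deleteEdge'] at hs
        have hle : (Finset.univ.filter fun g => G.src g = v ∨ G.dst g = v) ⊆
            Finset.univ.filter fun g => g ≠ e' ∧
              (G.src g ∈ ({u, v} : Finset V) ∧ G.dst g ∈ ({u, v} : Finset V)) := by
          intro g hg
          rw [Finset.mem_filter] at hg ⊢
          refine ⟨Finset.mem_univ g, fun h => he'S (h ▸ hg.2), hXspan g hg.2⟩
        have hge := Finset.card_le_card hle
        rw [hScard] at hge
        have hc2 : ({u, v} : Finset V).card = 2 := by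
          rw [Finset.card_insert_of_notMem (by simp [hu1]), Finset.card_singleton]
        rw [hc2] at hs
        omega
    have hVcard : Fintype.card V = 2 := by
      have huniv : (Finset.univ : Finset V) = {u, v} := by
        ext x
        simp only [Finset.mem_univ, true_iff, Finset.mem_insert, Finset.mem_singleton]
        exact hVuv x
      rw [← Finset.card_univ, huniv, Finset.card_insert_of_notMem (by simp [hu1]),
        Finset.card_singleton]
    have hEcard : Fintype.card E = 3 := by
      have h1 := hG.1
      rw [hVcard] at h1
      omega
    refine ⟨u, v, hu1, hVuv, hEcard, fun g => ?_⟩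
    rcases hVuv (G.src g) with h1 | h1 <;> rcases hVuv (G.dst g) with h2 | h2
    · exact absurd (h1.trans h2.symm) (hnl g)
    · exact Or.inl ⟨h1, h2⟩
    · exact Or.inr ⟨h1, h2⟩
    · exact absurd (h1.trans h2.symm) (hnl g)
end
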